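/- arXiv:1902.02129 — 2 statements merged into one kernel-verified Lean document; each statement's English description precedes it below -/
import Mathlib

section
/- Let (Ω, 𝓐, ℙ) be a probability space, κ ∈ (1/2, 1], L ∈ ℕ, and h_0 > h_1 > ⋯ > h_L > 0 real numbers with h_{ℓ−1} ≤ C₁ h_ℓ for all ℓ ∈ {1, …, L} and some C₁ > 0. Let Ψ, Ψ_0, …, Ψ_L be real random variables in L²(Ω; ℝ) satisfying ‖Ψ − Ψ_ℓ‖_{L²(Ω;ℝ)} ≤ C₂ h_ℓ^{2κ} for all ℓ ∈ {0, …, L} and some C₂ > 0, with the convention Ψ_{−1} := 0. Let ρ_1, …, ρ_L ∈ (0, 1) be weights with ∑_{ℓ=1}^{L} ρ_ℓ ≤ C_ρ for some C_ρ > 0. Let M_0, …, M_L ≥ 1 be integers with M_0 ≥ h_L^{−4κ} and M_ℓ ≥ (h_ℓ / h_L)^{4κ} ρ_ℓ^{−2} for ℓ ∈ {1, …, L}. For each ℓ, let D_ℓ^{(1)}, …, D_ℓ^{(M_ℓ)} be independent and identically distributed copies of Ψ_ℓ − Ψ_{ℓ−1}; no independence across different levels is assumed. Then the multilevel Monte Carlo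 estimator E^L(Ψ_L) := ∑_{ℓ=0}^{L} (1/M_ℓ) ∑_{i=1}^{M_ℓ} D_ℓ^{(i)} satisfies ‖E(Ψ) − E^L(Ψ_L)‖_{L²(Ω;ℝ)} ≤ ( C₂ + ‖Ψ_0‖_{L²(Ω;ℝ)} + C₂ (1 + max(C₁, C₁²)) C_ρ ) · h_L^{2κ}. -/
open MeasureTheory ProbabilityTheory

section Helpers
variable {Ω : Type*} [MeasurableSpace Ω] (P : Measure Ω) [IsProbabilityMeasure P]
set_option linter.unusedSectionVars false

lemma MLMC.rpow_half_sq (x : ℝ) : (x ^ 2) ^ (1/2 : ℝ) = |x| := by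
  rw [← sq_abs, ← Real.rpow_natCast |x| 2, ← Real.rpow_mul (abs_nonneg x)]
  norm_num

lemma MLMC.l2_nonneg (f : Ω → ℝ) : 0 ≤ (∫ ω, (f ω) ^ 2 ∂P) ^ (1/2 : ℝ) :=
  Real.rpow_nonneg (integral_nonneg fun ω => sq_nonneg _) _

lemma MLMC.l2_eq {f : Ω → ℝ} (hf : MemLp f 2 P) :
    (∫ ω, (f ω) ^ 2 ∂P) ^ (1/2 : ℝ) = (eLpNorm f 2 P).toReal := by
  rw [hf.eLpNorm_eq_integral_rpow_norm two_ne_zero ENNReal.ofNat_ne_top,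
    ENNReal.toReal_ofReal (by positivity)]
  norm_num [Real.rpow_two, Real.norm_eq_abs, sq_abs]

lemma MLMC.l2_tri {f g : Ω → ℝ} (hf : MemLp f 2 P) (hg : MemLp g 2 P) :
    (∫ ω, (f ω + g ω) ^ 2 ∂P) ^ (1/2 : ℝ) ≤
      (∫ ω, (f ω) ^ 2 ∂P) ^ (1/2 : ℝ) + (∫ ω, (g ω) ^ 2 ∂P) ^ (1/2 : ℝ) := by
  have hfg : MemLp (fun ω => f ω + g ω) 2 P := hf.add hg
  rw [MLMC.l2_eq P hf, MLMC.l2_eq P hg, MLMC.l2_eq P hfg]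
  rw [← ENNReal.toReal_add hf.2.ne hg.2.ne]
  exact ENNReal.toReal_mono (by exact ENNReal.add_ne_top.2 ⟨hf.2.ne, hg.2.ne⟩)
    (eLpNorm_add_le hf.1 hg.1 one_le_two)

lemma MLMC.l2_tri_sum {ι : Type*} (s : Finset ι) (f : ι → Ω → ℝ)
    (hf : ∀ i ∈ s, MemLp (f i) 2 P) :
    (∫ ω, (∑ i ∈ s, f i ω) ^ 2 ∂P) ^ (1/2 : ℝ) ≤
      ∑ i ∈ s, (∫ ω, (f i ω) ^ 2 ∂P) ^ (1/2 : ℝ) := by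
  classical
  induction s using Finset.induction_on with
  | empty => simp [Real.zero_rpow (by norm_num : (1/2:ℝ) ≠ 0)]
  | @insert a s ha ih =>
    simp only [Finset.sum_insert ha]
    have hs : MemLp (fun ω => ∑ i ∈ s, f i ω) 2 P :=
      memLp_finset_sum s fun i hi => hf i (Finset.mem_insert_of_mem hi)
    calc (∫ ω, (f a ω + ∑ i ∈ s, f i ω) ^ 2 ∂P) ^ (1/2 : ℝ)
        ≤ (∫ ω, (f a ω) ^ 2 ∂P) ^ (1/2 : ℝ) + (∫ ω, (∑ i ∈ s, f i ω) ^ 2 ∂P) ^ (1/2 : ℝ) :=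
          MLMC.l2_tri P (hf a (Finset.mem_insert_self a s)) hs
      _ ≤ _ := by
          exact add_le_add_right (ih fun i hi => hf i (Finset.mem_insert_of_mem hi)) _

lemma MLMC.abs_integral_le {f : Ω → ℝ} (hf : MemLp f 2 P) :
    |∫ ω, f ω ∂P| ≤ (∫ ω, (f ω) ^ 2 ∂P) ^ (1/2 : ℝ) := by
  have hv := variance_nonneg f P
  rw [variance_eq_sub hf] at hv
  have h1 : (∫ ω, f ω ∂P) ^ 2 ≤ ∫ ω, (f ω) ^ 2 ∂P := by
    have : P[f ^ 2] = ∫ ω, (f ω) ^ 2 ∂P := by simp [Pi.pow_apply]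
    rw [this] at hv; linarith
  calc |∫ ω, f ω ∂P| = ((∫ ω, f ω ∂P) ^ 2) ^ (1/2 : ℝ) := (MLMC.rpow_half_sq _).symm
    _ ≤ _ := Real.rpow_le_rpow (sq_nonneg _) h1 (by norm_num)

lemma MLMC.l2_sub_symm (f g : Ω → ℝ) :
    (∫ ω, (f ω - g ω) ^ 2 ∂P) = ∫ ω, (g ω - f ω) ^ 2 ∂P :=
  integral_congr_ae (Filter.Eventually.of_forall fun ω => by ring)

lemma MLMC.mc_var (Mn : ℕ) (hMn : 1 ≤ Mn) (Y : Ω → ℝ) (hY : MemLp Y 2 P)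
    (D : ℕ → Ω → ℝ)
    (hindep : iIndepFun (fun i : Fin Mn => D i) P)
    (hident : ∀ i < Mn, IdentDistrib (D i) Y P P) :
    (∫ ω, ((∫ ω', Y ω' ∂P) - (Mn : ℝ)⁻¹ * ∑ i ∈ Finset.range Mn, D i ω) ^ 2 ∂P)
      ≤ (Mn : ℝ)⁻¹ * ∫ ω, (Y ω) ^ 2 ∂P := by
  have hMnR : (0 : ℝ) < (Mn : ℝ) := by exact_mod_cast hMn
  have hD : ∀ i < Mn, MemLp (D i) 2 P := fun i hi => (hident i hi).symm.memLp_snd hY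
  set S : Ω → ℝ := fun ω => (Mn : ℝ)⁻¹ * ∑ i ∈ Finset.range Mn, D i ω with hSdef
  have hSsum : MemLp (fun ω => ∑ i ∈ Finset.range Mn, D i ω) 2 P :=
    memLp_finset_sum _ fun i hi => hD i (Finset.mem_range.mp hi)
  have hS : MemLp S 2 P := hSsum.const_mul _
  have hES : ∫ ω, S ω ∂P = ∫ ω, Y ω ∂P := by
    simp only [hSdef]
    rw [integral_const_mul, integral_finset_sum _
      (fun i hi => (hD i (Finset.mem_range.mp hi)).integrable one_le_two)]
    have : ∀ i ∈ Finset.range Mn, ∫ ω, D i ω ∂P = ∫ ω, Y ω ∂P := fun i hi =>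
      (hident i (Finset.mem_range.mp hi)).integral_eq
    rw [Finset.sum_congr rfl this, Finset.sum_const, Finset.card_range, nsmul_eq_mul]
    field_simp
  have hvar : (∫ ω, ((∫ ω', Y ω' ∂P) - S ω) ^ 2 ∂P) = variance S P := by
    rw [variance_eq_integral hS.aemeasurable]
    refine integral_congr_ae (Filter.Eventually.of_forall fun ω => ?_)
    simp only [Pi.pow_apply, Pi.sub_apply, hES]
    ring
  rw [show (∫ ω, ((∫ ω', Y ω' ∂P) - (Mn : ℝ)⁻¹ * ∑ i ∈ Finset.range Mn, D i ω) ^ 2 ∂P)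
      = variance S P from hvar]
  have hvS : variance S P = ((Mn : ℝ)⁻¹) ^ 2 * variance (∑ i ∈ Finset.range Mn, D i) P := by
    rw [show S = fun ω => (Mn : ℝ)⁻¹ * (∑ i ∈ Finset.range Mn, D i) ω from
      funext fun ω => by simp [hSdef, Finset.sum_apply]]
    exact variance_const_mul _ _ P
  have hpair : (Finset.range Mn : Set ℕ).Pairwise fun i j => IndepFun (D i) (D j) P := by
    intro i hi j hj hij
    have hi' : i < Mn := by simpa using hi
    have hj' : j < Mn := by simpa using hj
    exact hindep.indepFun (i := ⟨i, hi'⟩) (j := ⟨j, hj'⟩) (by simp [Fin.ext_iff, hij])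
  have hsum : variance (∑ i ∈ Finset.range Mn, D i) P
      = ∑ i ∈ Finset.range Mn, variance (D i) P :=
    IndepFun.variance_sum (fun i hi => hD i (Finset.mem_range.mp hi)) hpair
  have hident_var : ∀ i ∈ Finset.range Mn, variance (D i) P = variance Y P := fun i hi =>
    (hident i (Finset.mem_range.mp hi)).variance_eq
  have hvle : variance Y P ≤ ∫ ω, (Y ω) ^ 2 ∂P := by
    have := variance_le_expectation_sq (μ := P) hY.1
    simpa [Pi.pow_apply] using this
  rw [hvS, hsum, Finset.sum_congr rfl hident_var, Finset.sum_const, Finset.card_range,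
    nsmul_eq_mul]
  have : ((Mn : ℝ)⁻¹) ^ 2 * ((Mn : ℝ) * variance Y P) = (Mn : ℝ)⁻¹ * variance Y P := by
    field_simp
  rw [this]
  exact mul_le_mul_of_nonneg_left hvle (by positivity)

end Helpers


/-- **Theorem 6 of the paper.** Convergence of the multilevel Monte Carlo
estimator: under the approximation property `‖Ψ − Ψ_ℓ‖_{L²} ≤ C₂ h_ℓ^{2κ}` and the
sample-number choices `M₀ ≥ h_L^{−4κ}`, `M_ℓ ≥ (h_ℓ/h_L)^{4κ} ρ_ℓ^{−2}`, one has
`‖E(Ψ) − E^L(Ψ_L)‖_{L²} ≤ (C₂ + ‖Ψ₀‖_{L²} + C₂(1 + max(C₁, C₁²)) C_ρ) h_L^{2κ}`;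
independence of the sampled corrections across levels is not used. -/
theorem stmt_4 {Ω : Type*} [MeasurableSpace Ω] (P : Measure Ω) [IsProbabilityMeasure P]
    (κ : ℝ) (hκ : 1/2 < κ) (hκ1 : κ ≤ 1)
    (L : ℕ) (h : ℕ → ℝ) (hpos : 0 < h L)
    (hdec : ∀ ℓ < L, h (ℓ + 1) < h ℓ)
    (C₁ : ℝ) (hC₁ : 0 < C₁)
    (hC₁h : ∀ ℓ, 1 ≤ ℓ → ℓ ≤ L → h (ℓ - 1) ≤ C₁ * h ℓ)
    (Ψ : Ω → ℝ) (Ψl : ℕ → Ω → ℝ)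
    (hΨ : MemLp Ψ 2 P) (hΨl : ∀ ℓ ≤ L, MemLp (Ψl ℓ) 2 P)
    (C₂ : ℝ) (hC₂ : 0 < C₂)
    (happrox : ∀ ℓ ≤ L, (∫ ω, (Ψ ω - Ψl ℓ ω) ^ 2 ∂P) ^ (1/2 : ℝ) ≤ C₂ * h ℓ ^ (2 * κ))
    (ρ : ℕ → ℝ) (hρ : ∀ ℓ, 1 ≤ ℓ → ℓ ≤ L → ρ ℓ ∈ Set.Ioo (0 : ℝ) 1)
    (Cρ : ℝ) (hCρ : 0 < Cρ) (hρsum : ∑ ℓ ∈ Finset.Icc 1 L, ρ ℓ ≤ Cρ)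
    (M : ℕ → ℕ) (hM1 : ∀ ℓ ≤ L, 1 ≤ M ℓ)
    (hM0 : h L ^ (-(4 * κ)) ≤ (M 0 : ℝ))
    (hMl : ∀ ℓ, 1 ≤ ℓ → ℓ ≤ L → (h ℓ / h L) ^ (4 * κ) * ((ρ ℓ)⁻¹) ^ 2 ≤ (M ℓ : ℝ))
    (D : ℕ → ℕ → Ω → ℝ)
    (hindep : ∀ ℓ ≤ L, iIndepFun (fun i : Fin (M ℓ) => D ℓ i) P)
    (hident : ∀ ℓ ≤ L, ∀ i < M ℓ,
      IdentDistrib (D ℓ i) (fun ω => Ψl ℓ ω - (if ℓ = 0 then 0 else Ψl (ℓ - 1) ω)) P P) :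
    (∫ ω, ((∫ ω', Ψ ω' ∂P) -
        ∑ ℓ ∈ Finset.range (L + 1), (M ℓ : ℝ)⁻¹ * ∑ i ∈ Finset.range (M ℓ), D ℓ i ω) ^ 2 ∂P)
        ^ (1/2 : ℝ) ≤
      (C₂ + (∫ ω, (Ψl 0 ω) ^ 2 ∂P) ^ (1/2 : ℝ) + C₂ * (1 + max C₁ (C₁ ^ 2)) * Cρ)
        * h L ^ (2 * κ) := by
  classical
  -- positivity of the mesh sizes
  have hmono : ∀ b ≤ L, ∀ a ≤ b, h b ≤ h a := by
    intro b hb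
    induction b with
    | zero => intro a ha; interval_cases a; exact le_rfl
    | succ n ih =>
      intro a ha
      rcases Nat.eq_or_lt_of_le ha with rfl | ha'
      · exact le_rfl
      · exact le_trans (hdec n (by omega)).le (ih (by omega) a (by omega))
  have hposl : ∀ ℓ ≤ L, 0 < h ℓ := fun ℓ hℓ => lt_of_lt_of_le hpos (hmono L le_rfl ℓ hℓ)
  have h2κpos : (0:ℝ) < 2 * κ := by linarith
  have hLκpos : 0 < h L ^ (2 * κ) := Real.rpow_pos_of_pos hpos _
  set Cm : ℝ := max C₁ (C₁ ^ 2) with hCm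
  -- level differences
  set Y : ℕ → Ω → ℝ := fun ℓ ω => Ψl ℓ ω - (if ℓ = 0 then 0 else Ψl (ℓ - 1) ω) with hYdef
  have hYmem : ∀ ℓ ≤ L, MemLp (Y ℓ) 2 P := by
    intro ℓ hℓ
    by_cases h0 : ℓ = 0
    · subst h0
      simpa [hYdef] using hΨl 0 (Nat.zero_le L)
    · simp only [hYdef, if_neg h0]
      exact (hΨl ℓ hℓ).sub (hΨl (ℓ - 1) (le_trans (Nat.sub_le ℓ 1) hℓ))
  have hDmem : ∀ ℓ ≤ L, ∀ i < M ℓ, MemLp (D ℓ i) 2 P := fun ℓ hℓ i hi =>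
    ((hident ℓ hℓ i hi).symm.memLp_snd (hYmem ℓ hℓ))
  -- sample means and errors
  set g : ℕ → Ω → ℝ := fun ℓ ω =>
    (∫ ω', Y ℓ ω' ∂P) - (M ℓ : ℝ)⁻¹ * ∑ i ∈ Finset.range (M ℓ), D ℓ i ω with hgdef
  have hgmem : ∀ ℓ ∈ Finset.range (L + 1), MemLp (g ℓ) 2 P := by
    intro ℓ hℓ
    have hℓL : ℓ ≤ L := by simpa [Nat.lt_succ_iff] using hℓ
    exact (memLp_const _).sub
      ((memLp_finset_sum _ fun i hi => hDmem ℓ hℓL i (Finset.mem_range.mp hi)).const_mul _)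
  -- telescoping
  have tel : ∀ n, n ≤ L → ∑ ℓ ∈ Finset.range (n + 1), (∫ ω, Y ℓ ω ∂P) = ∫ ω, Ψl n ω ∂P := by
    intro n
    induction n with
    | zero => intro _; simp [hYdef]
    | succ n ih =>
      intro hn
      rw [Finset.sum_range_succ, ih (Nat.le_of_succ_le hn)]
      have hYs : ∫ ω, Y (n + 1) ω ∂P = (∫ ω, Ψl (n + 1) ω ∂P) - ∫ ω, Ψl n ω ∂P := by
        simp only [hYdef, if_neg (Nat.succ_ne_zero n), Nat.add_sub_cancel]
        exact integral_sub ((hΨl (n + 1) hn).integrable one_le_two)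
          ((hΨl n (Nat.le_of_succ_le hn)).integrable one_le_two)
      rw [hYs]; ring
  -- decomposition of the error
  set c : ℝ := (∫ ω', Ψ ω' ∂P) - ∫ ω, Ψl L ω ∂P with hc
  have hdecomp : (∫ ω, ((∫ ω', Ψ ω' ∂P) -
        ∑ ℓ ∈ Finset.range (L + 1), (M ℓ : ℝ)⁻¹ * ∑ i ∈ Finset.range (M ℓ), D ℓ i ω) ^ 2 ∂P)
      = ∫ ω, (c + ∑ ℓ ∈ Finset.range (L + 1), g ℓ ω) ^ 2 ∂P := by
    refine integral_congr_ae (Filter.Eventually.of_forall fun ω => ?_)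
    dsimp only
    have : ∑ ℓ ∈ Finset.range (L + 1), g ℓ ω
        = (∑ ℓ ∈ Finset.range (L + 1), (∫ ω', Y ℓ ω' ∂P))
          - ∑ ℓ ∈ Finset.range (L + 1), (M ℓ : ℝ)⁻¹ * ∑ i ∈ Finset.range (M ℓ), D ℓ i ω := by
      simp [hgdef, Finset.sum_sub_distrib]
    rw [this, tel L le_rfl, hc]
    ring
  -- per-level Monte Carlo bound
  have hMC : ∀ ℓ ≤ L, (∫ ω, (g ℓ ω) ^ 2 ∂P) ^ (1/2 : ℝ) ≤
      ((M ℓ : ℝ)⁻¹) ^ (1/2 : ℝ) * (∫ ω, (Y ℓ ω) ^ 2 ∂P) ^ (1/2 : ℝ) := by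
    intro ℓ hℓ
    have hMv := MLMC.mc_var P (M ℓ) (hM1 ℓ hℓ) (Y ℓ) (hYmem ℓ hℓ) (D ℓ) (hindep ℓ hℓ)
      (fun i hi => hident ℓ hℓ i hi)
    calc (∫ ω, (g ℓ ω) ^ 2 ∂P) ^ (1/2 : ℝ)
        ≤ ((M ℓ : ℝ)⁻¹ * ∫ ω, (Y ℓ ω) ^ 2 ∂P) ^ (1/2 : ℝ) := by
          refine Real.rpow_le_rpow (integral_nonneg fun ω => sq_nonneg _) ?_ (by norm_num)
          simpa [hgdef] using hMv
      _ = _ := Real.mul_rpow (by positivity) (integral_nonneg fun ω => sq_nonneg _)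
  -- bound on the level 0 sample count
  have hb0 : ((M 0 : ℝ)⁻¹) ^ (1/2 : ℝ) ≤ h L ^ (2 * κ) := by
    have h4 : (0 : ℝ) < h L ^ (4 * κ) := Real.rpow_pos_of_pos hpos _
    have hinv : (M 0 : ℝ)⁻¹ ≤ h L ^ (4 * κ) := by
      have hM0' : (h L ^ (4 * κ))⁻¹ ≤ (M 0 : ℝ) := by
        rw [← Real.rpow_neg hpos.le]; exact hM0
      exact inv_le_of_inv_le₀ h4 hM0'
    calc ((M 0 : ℝ)⁻¹) ^ (1/2 : ℝ) ≤ (h L ^ (4 * κ)) ^ (1/2 : ℝ) :=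
          Real.rpow_le_rpow (by positivity) hinv (by norm_num)
      _ = h L ^ (2 * κ) := by
          rw [← Real.rpow_mul hpos.le, show 4 * κ * (1/2 : ℝ) = 2 * κ by ring]
  -- bound on the level ℓ ≥ 1 sample counts
  have hbl : ∀ ℓ, 1 ≤ ℓ → ℓ ≤ L → ((M ℓ : ℝ)⁻¹) ^ (1/2 : ℝ) ≤ (h L / h ℓ) ^ (2 * κ) * ρ ℓ := by
    intro ℓ h1 hℓ
    have hℓpos := hposl ℓ hℓ
    have hρℓ := hρ ℓ h1 hℓ
    have hrpos : (0 : ℝ) < h ℓ / h L := div_pos hℓpos hpos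
    have hrpos' : (0 : ℝ) < h L / h ℓ := div_pos hpos hℓpos
    have hqpos : (0 : ℝ) < (h ℓ / h L) ^ (4 * κ) * ((ρ ℓ)⁻¹) ^ 2 := by
      have := hρℓ.1; positivity
    have hinv : (M ℓ : ℝ)⁻¹ ≤ (h L / h ℓ) ^ (4 * κ) * (ρ ℓ) ^ 2 := by
      calc (M ℓ : ℝ)⁻¹ ≤ ((h ℓ / h L) ^ (4 * κ) * ((ρ ℓ)⁻¹) ^ 2)⁻¹ :=
            inv_anti₀ hqpos (hMl ℓ h1 hℓ)
        _ = (h L / h ℓ) ^ (4 * κ) * (ρ ℓ) ^ 2 := by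
            rw [mul_inv, ← Real.inv_rpow hrpos.le, inv_div, inv_pow, inv_inv]
    have hhalf : ((h L / h ℓ) ^ (4 * κ) * (ρ ℓ) ^ 2) ^ (1/2 : ℝ)
        = (h L / h ℓ) ^ (2 * κ) * ρ ℓ := by
      rw [Real.mul_rpow (by positivity) (sq_nonneg _), MLMC.rpow_half_sq,
        abs_of_pos hρℓ.1, ← Real.rpow_mul hrpos'.le,
        show 4 * κ * (1/2 : ℝ) = 2 * κ by ring]
    calc ((M ℓ : ℝ)⁻¹) ^ (1/2 : ℝ)
        ≤ ((h L / h ℓ) ^ (4 * κ) * (ρ ℓ) ^ 2) ^ (1/2 : ℝ) :=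
          Real.rpow_le_rpow (by positivity) hinv (by norm_num)
      _ = _ := hhalf
  -- level 0 term
  have hY0 : (∫ ω, (Y 0 ω) ^ 2 ∂P) = ∫ ω, (Ψl 0 ω) ^ 2 ∂P := by
    refine integral_congr_ae (Filter.Eventually.of_forall fun ω => ?_)
    simp [hYdef]
  have hg0 : (∫ ω, (g 0 ω) ^ 2 ∂P) ^ (1/2 : ℝ) ≤
      (∫ ω, (Ψl 0 ω) ^ 2 ∂P) ^ (1/2 : ℝ) * h L ^ (2 * κ) := by
    calc (∫ ω, (g 0 ω) ^ 2 ∂P) ^ (1/2 : ℝ)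
        ≤ ((M 0 : ℝ)⁻¹) ^ (1/2 : ℝ) * (∫ ω, (Y 0 ω) ^ 2 ∂P) ^ (1/2 : ℝ) := hMC 0 (Nat.zero_le L)
      _ = (∫ ω, (Ψl 0 ω) ^ 2 ∂P) ^ (1/2 : ℝ) * ((M 0 : ℝ)⁻¹) ^ (1/2 : ℝ) := by rw [hY0]; ring
      _ ≤ _ := mul_le_mul_of_nonneg_left hb0 (MLMC.l2_nonneg P _)
  -- C₁ ^ (2κ) ≤ Cm
  have hCm0 : (0 : ℝ) ≤ Cm := le_trans hC₁.le (le_max_left _ _)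
  have hCmb : C₁ ^ (2 * κ) ≤ Cm := by
    rcases le_total 1 C₁ with hc1 | hc1
    · calc C₁ ^ (2 * κ) ≤ C₁ ^ (2 : ℝ) :=
            Real.rpow_le_rpow_of_exponent_le hc1 (by linarith)
        _ = C₁ ^ 2 := Real.rpow_two _
        _ ≤ Cm := le_max_right _ _
    · calc C₁ ^ (2 * κ) ≤ C₁ ^ (1 : ℝ) :=
            Real.rpow_le_rpow_of_exponent_ge hC₁ hc1 (by linarith)
        _ = C₁ := Real.rpow_one _
        _ ≤ Cm := le_max_left _ _
  -- bound on ‖Y ℓ‖ for ℓ ≥ 1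
  have hYb : ∀ ℓ, 1 ≤ ℓ → ℓ ≤ L →
      (∫ ω, (Y ℓ ω) ^ 2 ∂P) ^ (1/2 : ℝ) ≤ C₂ * (1 + Cm) * h ℓ ^ (2 * κ) := by
    intro ℓ h1 hℓ
    have hℓ0 : ℓ ≠ 0 := by omega
    have hℓ1L : ℓ - 1 ≤ L := le_trans (Nat.sub_le _ _) hℓ
    have e1 : (∫ ω, (Y ℓ ω) ^ 2 ∂P)
        = ∫ ω, ((Ψl ℓ ω - Ψ ω) + (Ψ ω - Ψl (ℓ - 1) ω)) ^ 2 ∂P := by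
      refine integral_congr_ae (Filter.Eventually.of_forall fun ω => ?_)
      simp only [hYdef, if_neg hℓ0]
      ring
    have m1 : MemLp (fun ω => Ψl ℓ ω - Ψ ω) 2 P := (hΨl ℓ hℓ).sub hΨ
    have m2 : MemLp (fun ω => Ψ ω - Ψl (ℓ - 1) ω) 2 P := hΨ.sub (hΨl (ℓ - 1) hℓ1L)
    have e2 : (∫ ω, (Ψl ℓ ω - Ψ ω) ^ 2 ∂P) ^ (1/2 : ℝ) ≤ C₂ * h ℓ ^ (2 * κ) := by
      rw [MLMC.l2_sub_symm]
      exact happrox ℓ hℓ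
    have e3 : (∫ ω, (Ψ ω - Ψl (ℓ - 1) ω) ^ 2 ∂P) ^ (1/2 : ℝ) ≤ C₂ * h (ℓ - 1) ^ (2 * κ) :=
      happrox _ hℓ1L
    have e4 : h (ℓ - 1) ^ (2 * κ) ≤ Cm * h ℓ ^ (2 * κ) := by
      calc h (ℓ - 1) ^ (2 * κ) ≤ (C₁ * h ℓ) ^ (2 * κ) :=
            Real.rpow_le_rpow (hposl _ hℓ1L).le (hC₁h ℓ h1 hℓ) h2κpos.le
        _ = C₁ ^ (2 * κ) * h ℓ ^ (2 * κ) := Real.mul_rpow hC₁.le (hposl ℓ hℓ).le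
        _ ≤ Cm * h ℓ ^ (2 * κ) :=
            mul_le_mul_of_nonneg_right hCmb (Real.rpow_nonneg (hposl ℓ hℓ).le _)
    calc (∫ ω, (Y ℓ ω) ^ 2 ∂P) ^ (1/2 : ℝ)
        = (∫ ω, ((Ψl ℓ ω - Ψ ω) + (Ψ ω - Ψl (ℓ - 1) ω)) ^ 2 ∂P) ^ (1/2 : ℝ) := by rw [e1]
      _ ≤ (∫ ω, (Ψl ℓ ω - Ψ ω) ^ 2 ∂P) ^ (1/2 : ℝ)
            + (∫ ω, (Ψ ω - Ψl (ℓ - 1) ω) ^ 2 ∂P) ^ (1/2 : ℝ) := MLMC.l2_tri P m1 m2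
      _ ≤ C₂ * h ℓ ^ (2 * κ) + C₂ * (Cm * h ℓ ^ (2 * κ)) :=
          add_le_add e2 (e3.trans (mul_le_mul_of_nonneg_left e4 hC₂.le))
      _ = C₂ * (1 + Cm) * h ℓ ^ (2 * κ) := by ring
  -- per-level bound for ℓ ≥ 1
  have hgl : ∀ ℓ, 1 ≤ ℓ → ℓ ≤ L →
      (∫ ω, (g ℓ ω) ^ 2 ∂P) ^ (1/2 : ℝ) ≤ C₂ * (1 + Cm) * h L ^ (2 * κ) * ρ ℓ := by
    intro ℓ h1 hℓ
    have hℓpos := hposl ℓ hℓ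
    have hρℓ := hρ ℓ h1 hℓ
    have key : (h L / h ℓ) ^ (2 * κ) * h ℓ ^ (2 * κ) = h L ^ (2 * κ) := by
      rw [← Real.mul_rpow (div_pos hpos hℓpos).le hℓpos.le,
        div_mul_cancel₀ _ (ne_of_gt hℓpos)]
    calc (∫ ω, (g ℓ ω) ^ 2 ∂P) ^ (1/2 : ℝ)
        ≤ ((M ℓ : ℝ)⁻¹) ^ (1/2 : ℝ) * (∫ ω, (Y ℓ ω) ^ 2 ∂P) ^ (1/2 : ℝ) := hMC ℓ hℓ
      _ ≤ ((h L / h ℓ) ^ (2 * κ) * ρ ℓ) * (C₂ * (1 + Cm) * h ℓ ^ (2 * κ)) := by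
          apply mul_le_mul (hbl ℓ h1 hℓ) (hYb ℓ h1 hℓ) (MLMC.l2_nonneg P _)
          exact mul_nonneg (Real.rpow_nonneg (div_pos hpos hℓpos).le _) hρℓ.1.le
      _ = C₂ * (1 + Cm) * h L ^ (2 * κ) * ρ ℓ := by rw [← key]; ring
  -- the bias term
  have hcb : |c| ≤ C₂ * h L ^ (2 * κ) := by
    have hcc : c = ∫ ω, (Ψ ω - Ψl L ω) ∂P := by
      rw [hc, ← integral_sub (hΨ.integrable one_le_two) ((hΨl L le_rfl).integrable one_le_two)]
    have m : MemLp (fun ω => Ψ ω - Ψl L ω) 2 P := hΨ.sub (hΨl L le_rfl)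
    calc |c| = |∫ ω, (Ψ ω - Ψl L ω) ∂P| := by rw [hcc]
      _ ≤ (∫ ω, (Ψ ω - Ψl L ω) ^ 2 ∂P) ^ (1/2 : ℝ) := MLMC.abs_integral_le P m
      _ ≤ C₂ * h L ^ (2 * κ) := happrox L le_rfl
  -- assemble
  rw [hdecomp]
  have msum : MemLp (fun ω => ∑ ℓ ∈ Finset.range (L + 1), g ℓ ω) 2 P :=
    memLp_finset_sum _ hgmem
  have hconst : (∫ ω, ((fun _ : Ω => c) ω) ^ 2 ∂P) ^ (1/2 : ℝ) = |c| := by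
    have : (∫ (_ : Ω), c ^ 2 ∂P) = c ^ 2 := by simp
    rw [this, MLMC.rpow_half_sq]
  have step1 : (∫ ω, (c + ∑ ℓ ∈ Finset.range (L + 1), g ℓ ω) ^ 2 ∂P) ^ (1/2 : ℝ)
      ≤ |c| + ∑ ℓ ∈ Finset.range (L + 1), (∫ ω, (g ℓ ω) ^ 2 ∂P) ^ (1/2 : ℝ) := by
    have t1 := MLMC.l2_tri P (memLp_const (c := c) (μ := P)) msum
    have t2 := MLMC.l2_tri_sum P (Finset.range (L + 1)) g hgmem
    calc (∫ ω, (c + ∑ ℓ ∈ Finset.range (L + 1), g ℓ ω) ^ 2 ∂P) ^ (1/2 : ℝ)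
        ≤ (∫ ω, ((fun _ : Ω => c) ω) ^ 2 ∂P) ^ (1/2 : ℝ)
            + (∫ ω, (∑ ℓ ∈ Finset.range (L + 1), g ℓ ω) ^ 2 ∂P) ^ (1/2 : ℝ) := t1
      _ ≤ |c| + ∑ ℓ ∈ Finset.range (L + 1), (∫ ω, (g ℓ ω) ^ 2 ∂P) ^ (1/2 : ℝ) := by
          rw [hconst]
          exact add_le_add_right t2 _
  have split : ∑ ℓ ∈ Finset.range (L + 1), (∫ ω, (g ℓ ω) ^ 2 ∂P) ^ (1/2 : ℝ)
      = (∑ i ∈ Finset.range L, (∫ ω, (g (i + 1) ω) ^ 2 ∂P) ^ (1/2 : ℝ))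
        + (∫ ω, (g 0 ω) ^ 2 ∂P) ^ (1/2 : ℝ) :=
    Finset.sum_range_succ' _ L
  have hsum1 : ∑ i ∈ Finset.range L, (∫ ω, (g (i + 1) ω) ^ 2 ∂P) ^ (1/2 : ℝ)
      ≤ C₂ * (1 + Cm) * h L ^ (2 * κ) * ∑ i ∈ Finset.range L, ρ (i + 1) := by
    rw [Finset.mul_sum]
    refine Finset.sum_le_sum fun i hi => ?_
    have hiL : i < L := Finset.mem_range.mp hi
    exact hgl (i + 1) (by omega) (by omega)
  have hρb : ∑ i ∈ Finset.range L, ρ (i + 1) ≤ Cρ := by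
    have : ∑ i ∈ Finset.range L, ρ (i + 1) = ∑ ℓ ∈ Finset.Icc 1 L, ρ ℓ := by
      rw [← Finset.Ico_add_one_right_eq_Icc, Finset.sum_Ico_eq_sum_range]
      exact Finset.sum_congr rfl fun i _ => by rw [add_comm]
    rw [this]
    exact hρsum
  have hmul : C₂ * (1 + Cm) * h L ^ (2 * κ) * (∑ i ∈ Finset.range L, ρ (i + 1))
      ≤ C₂ * (1 + Cm) * h L ^ (2 * κ) * Cρ := by
    apply mul_le_mul_of_nonneg_left hρb
    positivity
  have total : (∫ ω, (c + ∑ ℓ ∈ Finset.range (L + 1), g ℓ ω) ^ 2 ∂P) ^ (1/2 : ℝ)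
      ≤ C₂ * h L ^ (2 * κ)
        + (C₂ * (1 + Cm) * h L ^ (2 * κ) * (∑ i ∈ Finset.range L, ρ (i + 1))
          + (∫ ω, (Ψl 0 ω) ^ 2 ∂P) ^ (1/2 : ℝ) * h L ^ (2 * κ)) := by
    refine step1.trans ?_
    rw [split]
    exact add_le_add hcb (add_le_add hsum1 hg0)
  have hring : (C₂ + (∫ ω, (Ψl 0 ω) ^ 2 ∂P) ^ (1/2 : ℝ) + C₂ * (1 + Cm) * Cρ) * h L ^ (2 * κ)
      = C₂ * h L ^ (2 * κ) + (C₂ * (1 + Cm) * h L ^ (2 * κ) * Cρ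
        + (∫ ω, (Ψl 0 ω) ^ 2 ∂P) ^ (1/2 : ℝ) * h L ^ (2 * κ)) := by ring
  rw [hring]
  linarith [total, hmul]
end

section
/- Let (Ω, 𝓐, ℙ) be a probability space, L ∈ ℕ, and Δ = (Δ_0, …, Δ_L) a random vector whose components are real random variables in L²(Ω; ℝ). Let (Δ^{(i)})_{i ∈ ℕ} be independent and identically distributed copies of the vector Δ, let M_0 ≥ M_1 ≥ ⋯ ≥ M_L ≥ 1 be integers, and define the coupled multilevel Monte Carlo estimator E_C := ∑_{ℓ=0}^{L} (1/M_ℓ) ∑_{i=1}^{M_ℓ} Δ_ℓ^{(i)}. If Cov(Δ_j, Δ_k) ≥ 0 for all 0 ≤ j < k ≤ L, then Var(E_C) ≥ ∑_{ℓ=0}^{L} Var(Δ_ℓ)/M_ℓ, i.e. the variance of the coupled estimator is at least the variance of the standard MLMC estimator built from fully independent samples with the same sample numbers. -/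
open MeasureTheory ProbabilityTheory

/-- Covariance of two real random variables: `Cov(X,Y) = E[(X − E X)(Y − E Y)]`. -/
noncomputable def cov {Ω : Type*} [MeasurableSpace Ω] (μ : Measure Ω) (X Y : Ω → ℝ) : ℝ :=
  ∫ ω, (X ω - ∫ ω', X ω' ∂μ) * (Y ω - ∫ ω', Y ω' ∂μ) ∂μ

section Aux
set_option linter.unusedSectionVars false
variable {Ω : Type*} [MeasurableSpace Ω] {P : Measure Ω} [IsProbabilityMeasure P]

lemma integrable_mul2 {f g : Ω → ℝ} (hf : MemLp f 2 P) (hg : MemLp g 2 P) :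
    Integrable (fun ω => f ω * g ω) P := by
  have h : MemLp (f • g) 1 P := hg.smul hf (hpqr := ⟨by simpa using ENNReal.inv_two_add_inv_two⟩)
  exact h.integrable le_rfl

lemma cov_comm {X Y : Ω → ℝ} : cov P X Y = cov P Y X := by
  unfold cov; simp_rw [mul_comm]

lemma cov_self {X : Ω → ℝ} (hX : MemLp X 2 P) : cov P X X = variance X P := by
  rw [show variance X P = ∫ ω, (X ω - ∫ ω', X ω' ∂P) ^ 2 ∂P from variance_eq_integral hX.aemeasurable]
  unfold cov
  refine integral_congr_ae (Filter.Eventually.of_forall fun ω => ?_)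
  simp [Pi.pow_apply, Pi.sub_apply, sq]

lemma cov_const_mul (a b : ℝ) (X Y : Ω → ℝ) :
    cov P (fun ω => a * X ω) (fun ω => b * Y ω) = a * b * cov P X Y := by
  unfold cov
  calc (∫ ω, (a * X ω - ∫ ω', a * X ω' ∂P) * (b * Y ω - ∫ ω', b * Y ω' ∂P) ∂P)
      = ∫ ω, a * b * ((X ω - ∫ ω', X ω' ∂P) * (Y ω - ∫ ω', Y ω' ∂P)) ∂P := by
        congr 1
        funext ω
        rw [integral_const_mul, integral_const_mul]
        ring
    _ = a * b * ∫ ω, (X ω - ∫ ω', X ω' ∂P) * (Y ω - ∫ ω', Y ω' ∂P) ∂P :=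
        integral_const_mul _ _

lemma variance_sum_eq_cov {ι : Type*} (s : Finset ι) (X : ι → Ω → ℝ)
    (hX : ∀ j ∈ s, MemLp (X j) 2 P) :
    variance (fun ω => ∑ j ∈ s, X j ω) P = ∑ j ∈ s, ∑ k ∈ s, cov P (X j) (X k) := by
  classical
  have hmem : MemLp (fun ω => ∑ j ∈ s, X j ω) 2 P := by
    have h := memLp_finset_sum' (μ := P) (p := 2) s hX
    rwa [show (∑ j ∈ s, X j) = (fun ω => ∑ j ∈ s, X j ω) from
      funext fun ω => Finset.sum_apply ω s X] at h
  have hint : ∀ j ∈ s, Integrable (X j) P := fun j hj => (hX j hj).integrable one_le_two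
  have hE : (∫ ω, (∑ j ∈ s, X j ω) ∂P) = ∑ j ∈ s, ∫ ω, X j ω ∂P :=
    integral_finset_sum s hint
  rw [show variance (fun ω => ∑ j ∈ s, X j ω) P = integral P (((fun ω => ∑ j ∈ s, X j ω) - fun _ => ∫ ω', ∑ j ∈ s, X j ω' ∂P) ^ (2:ℕ)) from
    variance_eq_integral hmem.aemeasurable]
  rw [show ((fun ω => ∑ j ∈ s, X j ω) - fun _ => ∫ ω', ∑ j ∈ s, X j ω' ∂P) ^ (2:ℕ)
      = fun ω => ∑ j ∈ s, ∑ k ∈ s,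
          (X j ω - ∫ ω', X j ω' ∂P) * (X k ω - ∫ ω', X k ω' ∂P) from funext fun ω => by
    simp only [Pi.pow_apply, Pi.sub_apply, hE, ← Finset.sum_sub_distrib]
    rw [sq, Finset.sum_mul_sum]]
  rw [integral_finset_sum]
  · refine Finset.sum_congr rfl fun j hj => ?_
    rw [integral_finset_sum]
    · rfl
    · intro k hk
      exact integrable_mul2 ((hX j hj).sub (memLp_const _)) ((hX k hk).sub (memLp_const _))
  · intro j hj
    apply integrable_finset_sum
    intro k hk
    exact integrable_mul2 ((hX j hj).sub (memLp_const _)) ((hX k hk).sub (memLp_const _))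

end Aux

/-- If the level corrections are pairwise nonnegatively correlated,
the coupled MLMC estimator has variance at least that of the standard MLMC estimator
with the same sample numbers: `Var(E_C) ≥ ∑_ℓ Var(Δ_ℓ)/M_ℓ`. -/
theorem stmt_7 {Ω : Type*} [MeasurableSpace Ω] (P : Measure Ω) [IsProbabilityMeasure P]
    (L : ℕ) (Δ : ℕ → Ω → ℝ) (hΔ : ∀ ℓ ≤ L, MemLp (Δ ℓ) 2 P)
    (Di : ℕ → ℕ → Ω → ℝ)
    (hindep : iIndepFun
      (fun i => fun ω (ℓ : Fin (L + 1)) => Di i ℓ ω) P)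
    (hident : ∀ i : ℕ,
      IdentDistrib (fun ω (ℓ : Fin (L + 1)) => Di i ℓ ω) (fun ω (ℓ : Fin (L + 1)) => Δ ℓ ω) P P)
    (M : ℕ → ℕ) (hM1 : 1 ≤ M L) (hMdec : ∀ j k, j ≤ k → k ≤ L → M k ≤ M j)
    (hcov : ∀ j k, j < k → k ≤ L → 0 ≤ cov P (Δ j) (Δ k)) :
    ∑ ℓ ∈ Finset.range (L + 1), variance (Δ ℓ) P / (M ℓ : ℝ) ≤
      variance (fun ω => ∑ ℓ ∈ Finset.range (L + 1),
        (M ℓ : ℝ)⁻¹ * ∑ i ∈ Finset.range (M ℓ), Di i ℓ ω) P := by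
  classical
  have hle : ∀ ℓ ∈ Finset.range (L + 1), ℓ ≤ L := fun ℓ hℓ =>
    Nat.lt_succ_iff.mp (Finset.mem_range.mp hℓ)
  have hMpos : ∀ ℓ ∈ Finset.range (L + 1), 1 ≤ M ℓ := fun ℓ hℓ =>
    le_trans hM1 (hMdec ℓ L (hle ℓ hℓ) le_rfl)
  have hMle : ∀ ℓ ∈ Finset.range (L + 1), M ℓ ≤ M 0 := fun ℓ hℓ =>
    hMdec 0 ℓ (Nat.zero_le _) (hle ℓ hℓ)
  set s : ℕ → Finset ℕ := fun i => (Finset.range (L + 1)).filter (fun ℓ => i < M ℓ) with hs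
  have hsub : ∀ i, ∀ ℓ ∈ s i, ℓ ∈ Finset.range (L + 1) := fun i ℓ hℓ =>
    (Finset.mem_filter.mp hℓ).1
  set X : ℕ → Ω → ℝ := fun ℓ => fun ω => (M ℓ : ℝ)⁻¹ * Δ ℓ ω with hX
  set Z : ℕ → Ω → ℝ := fun i => fun ω => ∑ ℓ ∈ s i, X ℓ ω with hZ
  set Y : ℕ → Ω → ℝ := fun i => fun ω => ∑ ℓ ∈ s i, (M ℓ : ℝ)⁻¹ * Di i ℓ ω with hY
  set g : ℕ → (Fin (L + 1) → ℝ) → ℝ := fun i v =>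
    ∑ ℓ : Fin (L + 1), if i < M ℓ.1 then (M ℓ.1 : ℝ)⁻¹ * v ℓ else 0 with hgdef
  have hg : ∀ i, Measurable (g i) := by
    intro i
    apply Finset.measurable_sum
    intro ℓ _
    by_cases h : i < M ℓ.1
    · simp only [h, if_true]
      exact (measurable_pi_apply (a := ℓ) :
        Measurable fun v : Fin (L + 1) → ℝ => v ℓ).const_mul _
    · simp only [h, if_false]
      exact measurable_const
  have hgY : ∀ i, (g i) ∘ (fun ω (ℓ : Fin (L + 1)) => Di i ℓ ω) = Y i := by
    intro i
    funext ω
    show (∑ ℓ : Fin (L + 1), if i < M ℓ.1 then (M ℓ.1 : ℝ)⁻¹ * Di i ℓ.1 ω else 0) = _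
    rw [Fin.sum_univ_eq_sum_range (fun ℓ => if i < M ℓ then (M ℓ : ℝ)⁻¹ * Di i ℓ ω else 0)]
    exact (Finset.sum_filter _ _).symm
  have hgZ : ∀ i, (g i) ∘ (fun ω (ℓ : Fin (L + 1)) => Δ ℓ ω) = Z i := by
    intro i
    funext ω
    show (∑ ℓ : Fin (L + 1), if i < M ℓ.1 then (M ℓ.1 : ℝ)⁻¹ * Δ ℓ.1 ω else 0) = _
    rw [Fin.sum_univ_eq_sum_range (fun ℓ => if i < M ℓ then (M ℓ : ℝ)⁻¹ * Δ ℓ ω else 0)]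
    exact (Finset.sum_filter _ _).symm
  have hXmem : ∀ i, ∀ ℓ ∈ s i, MemLp (X ℓ) 2 P := fun i ℓ hℓ =>
    (hΔ ℓ (hle ℓ (hsub i ℓ hℓ))).const_mul _
  have hZmem : ∀ i, MemLp (Z i) 2 P := by
    intro i
    have h := memLp_finset_sum' (μ := P) (p := 2) (s i) (hXmem i)
    rwa [show (∑ ℓ ∈ s i, X ℓ) = Z i from funext fun ω => Finset.sum_apply ω (s i) X] at h
  have hidYZ : ∀ i, IdentDistrib (Y i) (Z i) P P := by
    intro i
    have h := (hident i).comp (hg i)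
    rwa [hgY i, hgZ i] at h
  have hYmem : ∀ i, MemLp (Y i) 2 P := fun i => (hidYZ i).symm.memLp_snd (hZmem i)
  have hYindep : Set.Pairwise ↑(Finset.range (M 0)) (fun i j => IndepFun (Y i) (Y j) P) := by
    intro i _ j _ hij
    have h := (hindep.indepFun hij).comp (hg i) (hg j)
    rwa [hgY i, hgY j] at h
  -- rewrite the estimator as a sum of independent blocks
  have hrange : ∀ ℓ ∈ Finset.range (L + 1),
      Finset.range (M ℓ) = (Finset.range (M 0)).filter (fun i => i < M ℓ) := by
    intro ℓ hℓ
    ext i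
    simp only [Finset.mem_filter, Finset.mem_range]
    exact ⟨fun h => ⟨lt_of_lt_of_le h (hMle ℓ hℓ), h⟩, fun h => h.2⟩
  have hEC : (fun ω => ∑ ℓ ∈ Finset.range (L + 1),
      (M ℓ : ℝ)⁻¹ * ∑ i ∈ Finset.range (M ℓ), Di i ℓ ω)
      = fun ω => ∑ i ∈ Finset.range (M 0), Y i ω := by
    funext ω
    calc ∑ ℓ ∈ Finset.range (L + 1), (M ℓ : ℝ)⁻¹ * ∑ i ∈ Finset.range (M ℓ), Di i ℓ ω
        = ∑ ℓ ∈ Finset.range (L + 1), ∑ i ∈ Finset.range (M 0),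
            (if i < M ℓ then (M ℓ : ℝ)⁻¹ * Di i ℓ ω else 0) := by
          refine Finset.sum_congr rfl fun ℓ hℓ => ?_
          rw [Finset.mul_sum, hrange ℓ hℓ, Finset.sum_filter]
      _ = ∑ i ∈ Finset.range (M 0), ∑ ℓ ∈ Finset.range (L + 1),
            (if i < M ℓ then (M ℓ : ℝ)⁻¹ * Di i ℓ ω else 0) := Finset.sum_comm
      _ = ∑ i ∈ Finset.range (M 0), Y i ω := by
          refine Finset.sum_congr rfl fun i _ => ?_
          exact (Finset.sum_filter _ _).symm
  rw [hEC]
  have hvar : variance (fun ω => ∑ i ∈ Finset.range (M 0), Y i ω) P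
      = ∑ i ∈ Finset.range (M 0), variance (Y i) P := by
    have h := IndepFun.variance_sum (μ := P) (X := Y) (s := Finset.range (M 0))
      (fun i _ => hYmem i) hYindep
    rwa [show (∑ i ∈ Finset.range (M 0), Y i)
      = fun ω => ∑ i ∈ Finset.range (M 0), Y i ω from
      funext fun ω => Finset.sum_apply ω (Finset.range (M 0)) Y] at h
  rw [hvar]
  -- lower bound each block variance
  have hZge : ∀ i ∈ Finset.range (M 0),
      (∑ ℓ ∈ s i, ((M ℓ : ℝ)⁻¹) ^ 2 * variance (Δ ℓ) P) ≤ variance (Y i) P := by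
    intro i _
    rw [(hidYZ i).variance_eq, hZ, variance_sum_eq_cov (s i) X (hXmem i)]
    refine Finset.sum_le_sum fun j hj => ?_
    have hdiag : ((M j : ℝ)⁻¹) ^ 2 * variance (Δ j) P = cov P (X j) (X j) := by
      rw [cov_self (hXmem i j hj), hX]
      exact (variance_const_mul _ _ _).symm
    rw [hdiag]
    refine Finset.single_le_sum (f := fun k => cov P (X j) (X k)) ?_ hj
    intro k hk
    show 0 ≤ cov P (X j) (X k)
    have hcovXX : cov P (X j) (X k) = (M j : ℝ)⁻¹ * (M k : ℝ)⁻¹ * cov P (Δ j) (Δ k) :=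
      cov_const_mul _ _ _ _
    rcases lt_trichotomy j k with h | h | h
    · rw [hcovXX]
      have := hcov j k h (hle k (hsub i k hk))
      positivity
    · subst h
      rw [cov_self (hXmem i j hj)]
      exact variance_nonneg _ _
    · rw [hcovXX, cov_comm]
      have := hcov k j h (hle j (hsub i j hj))
      positivity
  refine le_trans (le_of_eq ?_) (Finset.sum_le_sum hZge)
  -- combinatorial identity: ∑_ℓ Var/M_ℓ = ∑_i ∑_{ℓ ∈ s i} (M_ℓ)⁻² Var
  calc ∑ ℓ ∈ Finset.range (L + 1), variance (Δ ℓ) P / (M ℓ : ℝ)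
      = ∑ ℓ ∈ Finset.range (L + 1), ∑ i ∈ Finset.range (M 0),
          (if i < M ℓ then ((M ℓ : ℝ)⁻¹) ^ 2 * variance (Δ ℓ) P else 0) := by
        refine Finset.sum_congr rfl fun ℓ hℓ => ?_
        rw [← Finset.sum_filter, ← hrange ℓ hℓ, Finset.sum_const, Finset.card_range,
          nsmul_eq_mul]
        have hMne : (M ℓ : ℝ) ≠ 0 := by
          exact_mod_cast Nat.one_le_iff_ne_zero.mp (hMpos ℓ hℓ)
        field_simp
    _ = ∑ i ∈ Finset.range (M 0), ∑ ℓ ∈ Finset.range (L + 1),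
          (if i < M ℓ then ((M ℓ : ℝ)⁻¹) ^ 2 * variance (Δ ℓ) P else 0) := Finset.sum_comm
    _ = ∑ i ∈ Finset.range (M 0), ∑ ℓ ∈ s i, ((M ℓ : ℝ)⁻¹) ^ 2 * variance (Δ ℓ) P := by
        refine Finset.sum_congr rfl fun i _ => ?_
        exact (Finset.sum_filter _ _).symm
end
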